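/- Let q, s, m be positive and v > 0, and assume C₂·q³·m·v⁴ ≥ s² for some constant C₂ ≥ 1. Then (qv²e/s)·sup{ (T/log²(mv²T/s))·(s/(qv²))^{1/T} : T ≤ q, T ≥ se/(mv²), T ≥ 3, T ≥ log(mv²T/s) } ≤ C₂^{1/3}·q²·v²·e⁵/(s·log²(mv²q/s)), where the supremum is over integers T satisfying the stated constraints. -/

import Mathlib

open MeasureTheory ProbabilityTheory Real Finset
open scoped BigOperators ENNReal NNReal Classical

noncomputable section

/-- Euclidean (`ℓ₂`) norm of a finite real vector. -/
def l2 {k : ℕ} (x : Fin k → ℝ) : ℝ := Real.sqrt (∑ i, x i ^ 2)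

/-- Sup (`ℓ_∞`) norm of a finite real vector. -/
def linf {k : ℕ} (x : Fin k → ℝ) : ℝ := ⨆ i, |x i|

/-- The moment norm `‖X‖_q = (E |X|^q)^{1/q}`. -/
def mom {Ω : Type*} [MeasurableSpace Ω] (μ : Measure Ω) (q : ℝ) (X : Ω → ℝ) : ℝ :=
  (∫ ω, |X ω| ^ q ∂μ) ^ (1 / q)

/-- A sparse JL distribution, presented by the random families `σ` (Rademachers) and
`η` (Bernoulli selectors) on a probability space. -/
structure SparseJL {Ω : Type*} [MeasurableSpace Ω] (μ : Measure Ω) (n m s : ℕ) where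
  σ : Fin m → Fin n → Ω → ℝ
  η : Fin m → Fin n → Ω → ℝ
  σ_meas : ∀ r i, Measurable (σ r i)
  η_meas : ∀ r i, Measurable (η r i)
  σ_rademacher : ∀ r i, μ {ω | σ r i ω = 1} = 1/2 ∧ μ {ω | σ r i ω = -1} = 1/2
  σ_indep : iIndepFun (m := fun _ : Fin m × Fin n => (inferInstance : MeasurableSpace ℝ))
      (fun p ω => σ p.1 p.2 ω) μ
  η_bool : ∀ r i ω, η r i ω = 0 ∨ η r i ω = 1
  η_mean : ∀ r i, ∫ ω, η r i ω ∂μ = (s : ℝ) / (m : ℝ)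
  σ_η_indep : IndepFun (fun ω (p : Fin m × Fin n) => σ p.1 p.2 ω)
      (fun ω (p : Fin m × Fin n) => η p.1 p.2 ω) μ
  η_cols_indep : iIndepFun (m := fun _ : Fin n => (inferInstance : MeasurableSpace (Fin m → ℝ)))
      (fun i ω r => η r i ω) μ
  η_col_sum : ∀ i ω, ∑ r, η r i ω = (s : ℝ)
  η_neg_corr : ∀ i (S : Finset (Fin m)),
      ∫ ω, ∏ r ∈ S, η r i ω ∂μ ≤ ((s : ℝ) / (m : ℝ)) ^ S.card

/-- A uniform sparse JL distribution: each column's support is a uniformly random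
`s`-subset of the rows. -/
structure UniformSparseJL {Ω : Type*} [MeasurableSpace Ω] (μ : Measure Ω) (n m s : ℕ)
    extends SparseJL μ n m s where
  uniform : ∀ (i : Fin n) (S : Finset (Fin m)), S.card = s →
      μ {ω | ∀ r, η r i ω = if r ∈ S then 1 else 0} = ((Nat.choose m s : ℝ≥0∞))⁻¹

namespace SparseJL

variable {Ω : Type*} [MeasurableSpace Ω] {μ : Measure Ω} {n m s : ℕ}

/-- The random matrix entry `A_{r,i} = η_{r,i} σ_{r,i} / √s`. -/
def A (J : SparseJL μ n m s) (ω : Ω) (r : Fin m) (i : Fin n) : ℝ :=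
  J.η r i ω * J.σ r i ω / Real.sqrt s

/-- The row error term `Z_r(x) = Σ_{i ≠ j} η_{r,i} η_{r,j} σ_{r,i} σ_{r,j} x_i x_j`. -/
def Z (J : SparseJL μ n m s) (r : Fin m) (x : Fin n → ℝ) (ω : Ω) : ℝ :=
  ∑ i, ∑ j, if i ≠ j then
    J.η r i ω * J.η r j ω * J.σ r i ω * J.σ r j ω * x i * x j else 0

/-- The error term `R(x) = (1/s) Σ_r Z_r(x)`. -/
def R (J : SparseJL μ n m s) (x : Fin n → ℝ) (ω : Ω) : ℝ :=
  (1 / (s : ℝ)) * ∑ r, J.Z r x ω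

/-- `v(m, ε, δ, s)`: the sup of all `v ∈ [0,1]` such that the JL norm-preservation
condition holds with distortion `ε` and failure probability `δ` on
`S_v = {x : ‖x‖_∞ ≤ v ‖x‖₂}`. -/
def vstat (J : SparseJL μ n m s) (ε δ : ℝ) : ℝ :=
  sSup {v : ℝ | v ∈ Set.Icc (0:ℝ) 1 ∧ ∀ x : Fin n → ℝ, linf x ≤ v * l2 x →
    ENNReal.ofReal (1 - δ) <
      μ {ω | (1 - ε) * l2 x ≤ l2 (fun r => ∑ i, J.A ω r i * x i) ∧
             l2 (fun r => ∑ i, J.A ω r i * x i) ≤ (1 + ε) * l2 x}}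

end SparseJL

/-- The vector `(v, …, v, 0, …, 0)` with `N` nonzero coordinates. -/
def vVec (n N : ℕ) (v : ℝ) : Fin n → ℝ := fun i => if (i : ℕ) < N then v else 0

/-- Decreasing rearrangement of a finite tuple of reals. -/
def decSort {k : ℕ} (w : Fin k → ℝ) : Fin k → ℝ := w ∘ (Tuple.sort (fun i => -w i))


-- tangent line bound for log
private lemma tangent_log (x c : ℝ) (hx : 0 < x) (hc : 0 < c) :
    Real.log x ≤ x/c + Real.log c - 1 := by
  have h1 := Real.log_le_sub_one_of_pos (show (0:ℝ) < x/c by positivity)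
  have h2 : Real.log (x/c) = Real.log x - Real.log c := Real.log_div (ne_of_gt hx) (ne_of_gt hc)
  linarith

private lemma log3_lt : Real.log 3 < 1.0987 := by
  have h3 : (3:ℝ)^(200:ℕ) < 2^(317:ℕ) := by
    have h3n : (3:ℕ)^(200:ℕ) < 2^(317:ℕ) := by decide
    exact_mod_cast h3n
  have hlt := Real.log_lt_log (by positivity) h3
  rw [Real.log_pow, Real.log_pow] at hlt
  have h2 := Real.log_two_lt_d9
  push_cast at hlt
  nlinarith [Real.log_nonneg (by norm_num : (1:ℝ) ≤ 2)]

private lemma scalar_ineq (Tr L t : ℝ) (hT : Tr = 3 ∨ 4 ≤ Tr) (hL1 : 1 ≤ L)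
    (hLT : L ≤ Tr) (ht : 0 ≤ t) :
    (2*L + 2*t + Real.log Tr - 1)/Tr + 2*Real.log (1+t) ≤ t + 4 := by
  have h2 := Real.log_two_lt_d9
  have h2' := Real.log_nonneg (by norm_num : (1:ℝ) ≤ 2)
  have h3 := log3_lt
  rcases hT with hT | hT
  · subst hT
    have h6 : Real.log (1+t) ≤ (1+t)/6 + Real.log 6 - 1 :=
      tangent_log _ _ (by linarith) (by norm_num)
    have hl6 : Real.log 6 = Real.log 2 + Real.log 3 := by
      rw [show (6:ℝ) = 2*3 by norm_num, Real.log_mul] <;> norm_num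
    linarith
  · have hTpos : (0:ℝ) < Tr := by linarith
    have h4 : Real.log (1+t) ≤ (1+t)/4 + Real.log 4 - 1 :=
      tangent_log _ _ (by linarith) (by norm_num)
    have hl4 : Real.log 4 = 2 * Real.log 2 := by
      rw [show (4:ℝ) = 2^2 by norm_num, Real.log_pow]; norm_num
    have h7 : Real.log 7 < 2 := by
      have : (7:ℝ) < Real.exp 2 := by
        have h := Real.exp_one_gt_d9
        have he : Real.exp 2 = Real.exp 1 * Real.exp 1 := by rw [← Real.exp_add]; norm_num
        nlinarith
      calc Real.log 7 < Real.log (Real.exp 2) := Real.log_lt_log (by norm_num) this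
        _ = 2 := Real.log_exp 2
    have hlogT : Real.log Tr ≤ Tr/7 + 1 := by
      have := tangent_log Tr 7 hTpos (by norm_num); linarith
    have e1 : 2*L/Tr ≤ 2 := by
      rw [div_le_iff₀ hTpos]; linarith
    have e2 : 2*t/Tr ≤ t/2 := by
      rw [div_le_div_iff₀ hTpos (by norm_num)]; nlinarith
    have e3 : (Real.log Tr - 1)/Tr ≤ 1/7 := by
      rw [div_le_div_iff₀ hTpos (by norm_num)]; linarith
    have esplit : (2*L + 2*t + Real.log Tr - 1)/Tr
        = 2*L/Tr + 2*t/Tr + (Real.log Tr - 1)/Tr := by ring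
    linarith

private lemma final_ineq (Tr L Lq t c q X : ℝ)
    (hT34 : Tr = 3 ∨ 4 ≤ Tr) (hTrpos : 0 < Tr) (hL1 : 1 ≤ L) (hLT : L ≤ Tr) (ht : 0 ≤ t)
    (hLqt : Lq = L + t) (hqt : q = Tr * Real.exp t) (hc : 0 < c)
    (hX : X ≤ c * Real.exp ((2 * Lq + Real.log Tr - 1) / Tr)) :
    Tr * X * Lq ^ 2 ≤ c * q * Real.exp 1 ^ 4 * L ^ 2 := by
  set E : ℝ := (2 * Lq + Real.log Tr - 1) / Tr with hEdef
  clear_value E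
  have hLqpos : 0 < Lq := by rw [hLqt]; linarith
  have hLq' : Lq ≤ L * (1 + t) := by rw [hLqt]; nlinarith
  have hLq2 : Lq ^ 2 ≤ L ^ 2 * (1 + t) ^ 2 := by
    rw [← mul_pow]
    exact pow_le_pow_left₀ hLqpos.le hLq' 2
  have h1t : (1 + t) ^ 2 = Real.exp (2 * Real.log (1 + t)) := by
    rw [show (2:ℝ) * Real.log (1+t) = Real.log (1+t) + Real.log (1+t) by ring, Real.exp_add,
      Real.exp_log (by linarith)]
    ring
  have he4 : Real.exp 1 ^ 4 = Real.exp 4 := by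
    rw [← Real.exp_nat_mul]; norm_num
  have hscalar : E + 2 * Real.log (1 + t) ≤ t + 4 := by
    have hs := scalar_ineq Tr L t hT34 hL1 hLT ht
    have heq : E = (2*L + 2*t + Real.log Tr - 1)/Tr := by rw [hEdef, hLqt]; ring_nf
    linarith
  calc Tr * X * Lq ^ 2
      ≤ Tr * (c * Real.exp E) * (L ^ 2 * (1 + t) ^ 2) := by
        apply mul_le_mul
        · exact mul_le_mul_of_nonneg_left hX hTrpos.le
        · exact hLq2
        · positivity
        · positivity
    _ = (c * Tr * L ^ 2) * (Real.exp E * Real.exp (2 * Real.log (1 + t))) := by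
        rw [h1t]; ring
    _ = (c * Tr * L ^ 2) * Real.exp (E + 2 * Real.log (1 + t)) := by
        rw [Real.exp_add]
    _ ≤ (c * Tr * L ^ 2) * Real.exp (t + 4) := by
        apply mul_le_mul_of_nonneg_left (Real.exp_le_exp.2 hscalar)
        have hLpos : (0:ℝ) < L := by linarith
        positivity
    _ = c * q * Real.exp 1 ^ 4 * L ^ 2 := by
        rw [hqt, he4, Real.exp_add]; ring

private lemma key_bound (q s m v C₂ : ℝ) (hq : 0 < q) (hs : 0 < s) (hm : 0 < m)
    (hv : 0 < v) (hC₂ : 1 ≤ C₂) (h : C₂ * q ^ 3 * m * v ^ 4 ≥ s ^ 2) (T : ℕ)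
    (hTq : (T:ℝ) ≤ q) (hPe : s * Real.exp 1 / (m * v ^ 2) ≤ (T:ℝ))
    (hT3 : 3 ≤ T) (hLT : Real.log (m * v ^ 2 * (T:ℝ) / s) ≤ (T:ℝ)) :
    (T : ℝ) / Real.log (m * v ^ 2 * (T:ℝ) / s) ^ 2 * (s / (q * v ^ 2)) ^ ((1:ℝ)/(T:ℝ)) ≤
      C₂ ^ ((1:ℝ)/3) * q * Real.exp 1 ^ 4 / Real.log (m * v ^ 2 * q / s) ^ 2 := by
  have hTr3 : (3:ℝ) ≤ (T:ℝ) := by exact_mod_cast hT3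
  have hTrpos : (0:ℝ) < (T:ℝ) := by linarith
  have hP : (0:ℝ) < m * v ^ 2 * (T:ℝ) / s := by positivity
  have hQ : (0:ℝ) < m * v ^ 2 * q / s := by positivity
  have hPe' : Real.exp 1 ≤ m * v ^ 2 * (T:ℝ) / s := by
    rw [div_le_iff₀ (by positivity : (0:ℝ) < m * v ^ 2)] at hPe
    rw [le_div_iff₀ hs]
    nlinarith
  have hL1 : (1:ℝ) ≤ Real.log (m * v ^ 2 * (T:ℝ) / s) := by
    have := Real.log_le_log (Real.exp_pos 1) hPe'
    rwa [Real.log_exp] at this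
  have hLpos : (0:ℝ) < Real.log (m * v ^ 2 * (T:ℝ) / s) := by linarith
  have ht : 0 ≤ Real.log (q / (T:ℝ)) := Real.log_nonneg (by rw [le_div_iff₀ hTrpos]; linarith)
  have hLqt : Real.log (m * v ^ 2 * q / s)
      = Real.log (m * v ^ 2 * (T:ℝ) / s) + Real.log (q / (T:ℝ)) := by
    rw [← Real.log_mul (ne_of_gt hP) (by positivity)]
    congr 1
    field_simp
  have hLqpos : (0:ℝ) < Real.log (m * v ^ 2 * q / s) := by rw [hLqt]; linarith
  have hqt : q = (T:ℝ) * Real.exp (Real.log (q / (T:ℝ))) := by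
    rw [Real.exp_log (by positivity)]
    field_simp
  -- base bound
  have h1 : s / (q * v ^ 2) ≤ C₂ * q * (m * v ^ 2 * q / s) := by
    rw [div_le_iff₀ (by positivity)]
    have hexp : C₂ * q * (m * v ^ 2 * q / s) * (q * v ^ 2) * s = C₂ * q ^ 3 * m * v ^ 4 := by
      field_simp
    nlinarith [sq_nonneg s]
  have h2 : C₂ * q * (m * v ^ 2 * q / s)
      ≤ C₂ * (m * v ^ 2 * q / s) ^ 2 * (T:ℝ) / Real.exp 1 := by
    rw [le_div_iff₀ (Real.exp_pos 1)]
    have hQT : (m * v ^ 2 * q / s) * (T:ℝ) = (m * v ^ 2 * (T:ℝ) / s) * q := by ring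
    have hc : (0:ℝ) ≤ C₂ * (m * v ^ 2 * q / s) * q := by positivity
    nlinarith [mul_le_mul_of_nonneg_left hPe' hc]
  have hbase : s / (q * v ^ 2) ≤ C₂ * (m * v ^ 2 * q / s) ^ 2 * (T:ℝ) / Real.exp 1 :=
    le_trans h1 h2
  have e1 : (s / (q * v ^ 2)) ^ ((1:ℝ)/(T:ℝ))
      ≤ (C₂ * (m * v ^ 2 * q / s) ^ 2 * (T:ℝ) / Real.exp 1) ^ ((1:ℝ)/(T:ℝ)) :=
    Real.rpow_le_rpow (by positivity) hbase (by positivity)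
  have e2 : (C₂ * (m * v ^ 2 * q / s) ^ 2 * (T:ℝ) / Real.exp 1) ^ ((1:ℝ)/(T:ℝ))
      = C₂ ^ ((1:ℝ)/(T:ℝ)) * ((m * v ^ 2 * q / s) ^ 2 * (T:ℝ) / Real.exp 1) ^ ((1:ℝ)/(T:ℝ)) := by
    rw [← Real.mul_rpow (by positivity) (by positivity)]
    congr 1
    ring
  have e3 : C₂ ^ ((1:ℝ)/(T:ℝ)) ≤ C₂ ^ ((1:ℝ)/3) :=
    Real.rpow_le_rpow_of_exponent_le hC₂ (by
      rw [div_le_div_iff₀ hTrpos (by norm_num)]; linarith)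
  have e4 : ((m * v ^ 2 * q / s) ^ 2 * (T:ℝ) / Real.exp 1) ^ ((1:ℝ)/(T:ℝ))
      = Real.exp ((2 * Real.log (m * v ^ 2 * q / s) + Real.log (T:ℝ) - 1) / (T:ℝ)) := by
    rw [Real.rpow_def_of_pos (by positivity)]
    congr 1
    rw [Real.log_div (by positivity) (Real.exp_ne_zero 1),
      Real.log_mul (by positivity) (ne_of_gt hTrpos), Real.log_pow, Real.log_exp]
    push_cast
    ring
  have hX : (s / (q * v ^ 2)) ^ ((1:ℝ)/(T:ℝ))
      ≤ C₂ ^ ((1:ℝ)/3) * Real.exp ((2 * Real.log (m * v ^ 2 * q / s) + Real.log (T:ℝ) - 1) / (T:ℝ)) := by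
    calc (s / (q * v ^ 2)) ^ ((1:ℝ)/(T:ℝ))
        ≤ C₂ ^ ((1:ℝ)/(T:ℝ)) * ((m * v ^ 2 * q / s) ^ 2 * (T:ℝ) / Real.exp 1) ^ ((1:ℝ)/(T:ℝ)) := by
          rw [← e2]; exact e1
      _ ≤ _ := by
          rw [e4]
          exact mul_le_mul_of_nonneg_right e3 (Real.exp_pos _).le
  have hT34 : (T:ℝ) = 3 ∨ (4:ℝ) ≤ (T:ℝ) := by
    rcases eq_or_lt_of_le hT3 with h' | h'
    · left; rw [← h']; norm_num
    · right; exact_mod_cast h'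
  rw [div_mul_eq_mul_div, div_le_div_iff₀ (pow_pos hLpos 2) (pow_pos hLqpos 2)]
  exact final_ineq (T:ℝ) (Real.log (m * v ^ 2 * (T:ℝ) / s)) (Real.log (m * v ^ 2 * q / s))
    (Real.log (q / (T:ℝ))) (C₂ ^ ((1:ℝ)/3)) q ((s / (q * v ^ 2)) ^ ((1:ℝ)/(T:ℝ)))
    hT34 hTrpos hL1 hLT ht hLqt hqt (by positivity) hX

/-- Lemma 30 of the paper, a purely analytic bound on a supremum. -/
theorem statement19 (q s m v C₂ : ℝ) (hq : 0 < q) (hs : 0 < s) (hm : 0 < m)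
    (hv : 0 < v) (hC₂ : 1 ≤ C₂) (h : C₂ * q ^ 3 * m * v ^ 4 ≥ s ^ 2) :
    q * v ^ 2 * Real.exp 1 / s *
        sSup {z : ℝ | ∃ T : ℕ, (T : ℝ) ≤ q ∧ s * Real.exp 1 / (m * v ^ 2) ≤ (T : ℝ) ∧
          3 ≤ T ∧ Real.log (m * v ^ 2 * T / s) ≤ (T : ℝ) ∧
          z = (T : ℝ) / Real.log (m * v ^ 2 * T / s) ^ 2 *
            (s / (q * v ^ 2)) ^ ((1 : ℝ) / T)} ≤
      C₂ ^ ((1 : ℝ) / 3) * q ^ 2 * v ^ 2 * Real.exp 1 ^ 5 /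
        (s * Real.log (m * v ^ 2 * q / s) ^ 2) := by
  have hsup : sSup {z : ℝ | ∃ T : ℕ, (T : ℝ) ≤ q ∧ s * Real.exp 1 / (m * v ^ 2) ≤ (T : ℝ) ∧
        3 ≤ T ∧ Real.log (m * v ^ 2 * T / s) ≤ (T : ℝ) ∧
        z = (T : ℝ) / Real.log (m * v ^ 2 * T / s) ^ 2 *
          (s / (q * v ^ 2)) ^ ((1 : ℝ) / T)} ≤
      C₂ ^ ((1:ℝ)/3) * q * Real.exp 1 ^ 4 / Real.log (m * v ^ 2 * q / s) ^ 2 := by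
    apply Real.sSup_le
    · rintro z ⟨T, hTq, hPe, hT3, hLT, rfl⟩
      exact key_bound q s m v C₂ hq hs hm hv hC₂ h T hTq hPe hT3 hLT
    · positivity
  calc q * v ^ 2 * Real.exp 1 / s * sSup _
      ≤ q * v ^ 2 * Real.exp 1 / s *
        (C₂ ^ ((1:ℝ)/3) * q * Real.exp 1 ^ 4 / Real.log (m * v ^ 2 * q / s) ^ 2) :=
        mul_le_mul_of_nonneg_left hsup (by positivity)
    _ = C₂ ^ ((1 : ℝ) / 3) * q ^ 2 * v ^ 2 * Real.exp 1 ^ 5 /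
        (s * Real.log (m * v ^ 2 * q / s) ^ 2) := by ring
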